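/- arXiv:1510.03463 — 3 statements merged into one kernel-verified Lean document; each statement's English description precedes it below -/
import Mathlib

section
/- Let A, B ∈ R_+^{n×n} be matrices with nonnegative entries and let C ∈ R^{n×n} satisfy C_{ij} ≤ √(A_{ij} B_{ij}) for all i,j (with C having nonnegative entries). Then ρ(C) ≤ √(ρ(A) ρ(B)), where ρ denotes the spectral radius. -/
/-- The spectral radius of a complex square matrix: the supremum of the moduli
of its (complex) eigenvalues. -/
noncomputable def specRad {n : ℕ} (M : Matrix (Fin n) (Fin n) ℂ) : ℝ :=
  sSup ((fun z : ℂ => ‖z‖) '' spectrum ℂ M)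

section Aux

open scoped NNReal ENNReal

attribute [local instance] Matrix.linftyOpNormedAddCommGroup Matrix.linftyOpNormedRing
  Matrix.linftyOpNormedAlgebra

open Finset

variable {n : ℕ}

/-- Cauchy–Schwarz for sums of square roots. -/
lemma sum_sqrt_mul_le (f g : Fin n → ℝ) (hf : ∀ j, 0 ≤ f j) (hg : ∀ j, 0 ≤ g j) :
    ∑ j, Real.sqrt (f j * g j) ≤ Real.sqrt ((∑ j, f j) * ∑ j, g j) := by
  have h := sum_sq_le_sum_mul_sum_of_sq_eq_mul (univ : Finset (Fin n))
    (r := fun j => Real.sqrt (f j * g j)) (f := f) (g := g)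
    (fun i _ => hf i) (fun i _ => hg i)
    (fun i _ => Real.sq_sqrt (mul_nonneg (hf i) (hg i)))
  have h0 : 0 ≤ ∑ j, Real.sqrt (f j * g j) :=
    Finset.sum_nonneg fun j _ => Real.sqrt_nonneg _
  calc ∑ j, Real.sqrt (f j * g j)
      = Real.sqrt ((∑ j, Real.sqrt (f j * g j)) ^ 2) := by
        rw [Real.sqrt_sq h0]
    _ ≤ Real.sqrt ((∑ j, f j) * ∑ j, g j) := Real.sqrt_le_sqrt h

lemma pow_entry_nonneg {A : Matrix (Fin n) (Fin n) ℝ} (hA : ∀ i j, 0 ≤ A i j) :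
    ∀ k i j, 0 ≤ (A ^ k) i j := by
  intro k
  induction k with
  | zero =>
    intro i j
    simp only [pow_zero, Matrix.one_apply]
    split <;> norm_num
  | succ k ih =>
    intro i j
    rw [pow_succ, Matrix.mul_apply]
    exact Finset.sum_nonneg fun l _ => mul_nonneg (ih i l) (hA l j)

lemma pow_entry_cs {A B C : Matrix (Fin n) (Fin n) ℝ}
    (hA : ∀ i j, 0 ≤ A i j) (hB : ∀ i j, 0 ≤ B i j) (hC : ∀ i j, 0 ≤ C i j)
    (h : ∀ i j, C i j ≤ Real.sqrt (A i j * B i j)) :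
    ∀ k i j, (C ^ k) i j ≤ Real.sqrt ((A ^ k) i j * (B ^ k) i j) := by
  intro k
  induction k with
  | zero =>
    intro i j
    simp only [pow_zero, Matrix.one_apply]
    split <;> norm_num
  | succ k ih =>
    intro i j
    rw [pow_succ, pow_succ, pow_succ, Matrix.mul_apply, Matrix.mul_apply, Matrix.mul_apply]
    calc ∑ l, (C ^ k) i l * C l j
        ≤ ∑ l, Real.sqrt (((A ^ k) i l * A l j) * ((B ^ k) i l * B l j)) := by
          apply Finset.sum_le_sum
          intro l _
          calc (C ^ k) i l * C l j
              ≤ Real.sqrt ((A ^ k) i l * (B ^ k) i l) * Real.sqrt (A l j * B l j) :=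
                mul_le_mul (ih i l) (h l j) (hC l j) (Real.sqrt_nonneg _)
            _ = Real.sqrt (((A ^ k) i l * A l j) * ((B ^ k) i l * B l j)) := by
                rw [← Real.sqrt_mul (mul_nonneg (pow_entry_nonneg hA k i l)
                  (pow_entry_nonneg hB k i l))]
                ring_nf
      _ ≤ Real.sqrt ((∑ l, (A ^ k) i l * A l j) * ∑ l, (B ^ k) i l * B l j) :=
          sum_sqrt_mul_le _ _
            (fun l => mul_nonneg (pow_entry_nonneg hA k i l) (hA l j))
            (fun l => mul_nonneg (pow_entry_nonneg hB k i l) (hB l j))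

lemma row_sum_le_norm (M : Matrix (Fin n) (Fin n) ℂ) (i : Fin n) :
    ∑ j, ‖M i j‖ ≤ ‖M‖ := by
  rw [Matrix.linfty_opNorm_def]
  have : (∑ j, ‖M i j‖₊ : ℝ≥0) ≤ (univ : Finset (Fin n)).sup fun i => ∑ j, ‖M i j‖₊ :=
    Finset.le_sup (f := fun i => ∑ j, ‖M i j‖₊) (Finset.mem_univ i)
  calc ∑ j, ‖M i j‖ = ((∑ j, ‖M i j‖₊ : ℝ≥0) : ℝ) := by push_cast; rfl
    _ ≤ _ := by exact_mod_cast this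

lemma norm_le_of_row_sums (M : Matrix (Fin n) (Fin n) ℂ) {r : ℝ} (hr : 0 ≤ r)
    (h : ∀ i, ∑ j, ‖M i j‖ ≤ r) : ‖M‖ ≤ r := by
  rw [Matrix.linfty_opNorm_def]
  have : ((univ : Finset (Fin n)).sup fun i => ∑ j, ‖M i j‖₊) ≤ r.toNNReal := by
    apply Finset.sup_le
    intro i _
    rw [Real.le_toNNReal_iff_coe_le hr]
    calc ((∑ j, ‖M i j‖₊ : ℝ≥0) : ℝ) = ∑ j, ‖M i j‖ := by push_cast; rfl
      _ ≤ r := h i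
  calc (((univ : Finset (Fin n)).sup fun i => ∑ j, ‖M i j‖₊ : ℝ≥0) : ℝ)
      ≤ (r.toNNReal : ℝ) := by exact_mod_cast this
    _ = r := Real.coe_toNNReal r hr

/-- The norm bound coming from entrywise Cauchy–Schwarz domination. -/
lemma norm_map_le_sqrt {X Y Z : Matrix (Fin n) (Fin n) ℝ}
    (hX : ∀ i j, 0 ≤ X i j) (hY : ∀ i j, 0 ≤ Y i j) (hZ : ∀ i j, 0 ≤ Z i j)
    (h : ∀ i j, Z i j ≤ Real.sqrt (X i j * Y i j)) :
    ‖Z.map Complex.ofReal‖ ≤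
      Real.sqrt (‖X.map Complex.ofReal‖ * ‖Y.map Complex.ofReal‖) := by
  apply norm_le_of_row_sums _ (Real.sqrt_nonneg _)
  intro i
  have hXi : ∑ j, X i j ≤ ‖X.map Complex.ofReal‖ := by
    calc ∑ j, X i j = ∑ j, ‖(X.map Complex.ofReal) i j‖ := by
          apply Finset.sum_congr rfl
          intro j _
          simp [Matrix.map_apply, Complex.norm_real, abs_of_nonneg (hX i j)]
      _ ≤ _ := row_sum_le_norm _ i
  have hYi : ∑ j, Y i j ≤ ‖Y.map Complex.ofReal‖ := by
    calc ∑ j, Y i j = ∑ j, ‖(Y.map Complex.ofReal) i j‖ := by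
          apply Finset.sum_congr rfl
          intro j _
          simp [Matrix.map_apply, Complex.norm_real, abs_of_nonneg (hY i j)]
      _ ≤ _ := row_sum_le_norm _ i
  calc ∑ j, ‖(Z.map Complex.ofReal) i j‖ = ∑ j, Z i j := by
        apply Finset.sum_congr rfl
        intro j _
        simp [Matrix.map_apply, Complex.norm_real, abs_of_nonneg (hZ i j)]
    _ ≤ ∑ j, Real.sqrt (X i j * Y i j) := Finset.sum_le_sum fun j _ => h i j
    _ ≤ Real.sqrt ((∑ j, X i j) * ∑ j, Y i j) :=
        sum_sqrt_mul_le _ _ (fun j => hX i j) (fun j => hY i j)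
    _ ≤ Real.sqrt (‖X.map Complex.ofReal‖ * ‖Y.map Complex.ofReal‖) := by
        apply Real.sqrt_le_sqrt
        exact mul_le_mul hXi hYi (Finset.sum_nonneg fun j _ => hY i j)
          ((Finset.sum_nonneg fun j _ => hX i j).trans hXi)

open Filter Topology ENNReal in
/-- Key spectral bound via Gelfand's formula. -/
lemma abs_sq_le_of_norm_pow [Nonempty (Fin n)] (a b c : Matrix (Fin n) (Fin n) ℂ)
    (hnorm : ∀ k : ℕ, ‖c ^ k‖ ^ 2 ≤ ‖a ^ k‖ * ‖b ^ k‖) {μ : ℂ}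
    (hμ : μ ∈ spectrum ℂ c) :
    ‖μ‖ ^ 2 ≤ (spectralRadius ℂ a).toReal * (spectralRadius ℂ b).toReal := by
  have hLa : spectralRadius ℂ a ≠ ⊤ :=
    ((spectrum.spectralRadius_le_nnnorm a).trans_lt coe_lt_top).ne
  have hLb : spectralRadius ℂ b ≠ ⊤ :=
    ((spectrum.spectralRadius_le_nnnorm b).trans_lt coe_lt_top).ne
  have ta := spectrum.pow_nnnorm_pow_one_div_tendsto_nhds_spectralRadius a
  have tb := spectrum.pow_nnnorm_pow_one_div_tendsto_nhds_spectralRadius b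
  have tmul : Tendsto (fun k : ℕ => (‖a ^ k‖₊ : ℝ≥0∞) ^ (1 / k : ℝ) *
      (‖b ^ k‖₊ : ℝ≥0∞) ^ (1 / k : ℝ)) atTop
      (𝓝 (spectralRadius ℂ a * spectralRadius ℂ b)) :=
    ENNReal.Tendsto.mul ta (Or.inr hLb) tb (Or.inr hLa)
  have key : ((‖μ‖₊ : ℝ≥0∞)) ^ (2 : ℕ) ≤ spectralRadius ℂ a * spectralRadius ℂ b := by
    refine ge_of_tendsto tmul ?_
    filter_upwards [eventually_ge_atTop 1] with k hk
    have hμk : μ ^ k ∈ spectrum ℂ (c ^ k) := by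
      rw [spectrum.map_pow_of_pos c hk]
      exact Set.mem_image_of_mem _ hμ
    have h1 : ‖μ ^ k‖ ≤ ‖c ^ k‖ := spectrum.norm_le_norm_of_mem hμk
    have h2 : (‖μ‖₊ : ℝ≥0) ^ (2 * k) ≤ ‖a ^ k‖₊ * ‖b ^ k‖₊ := by
      have : ‖μ‖ ^ (2 * k) ≤ ‖a ^ k‖ * ‖b ^ k‖ := by
        calc ‖μ‖ ^ (2 * k) = (‖μ‖ ^ k) ^ 2 := by rw [← pow_mul, mul_comm]
          _ ≤ ‖c ^ k‖ ^ 2 := by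
              apply pow_le_pow_left₀ (pow_nonneg (norm_nonneg _) _)
              rw [← norm_pow]; exact h1
          _ ≤ ‖a ^ k‖ * ‖b ^ k‖ := hnorm k
      rw [← NNReal.coe_le_coe]
      push_cast
      exact this
    have h3 : ((‖μ‖₊ : ℝ≥0∞)) ^ ((2 * k : ℕ) : ℝ) ≤ (‖a ^ k‖₊ : ℝ≥0∞) * ‖b ^ k‖₊ := by
      rw [ENNReal.rpow_natCast]
      calc ((‖μ‖₊ : ℝ≥0∞)) ^ (2 * k) = ((‖μ‖₊ ^ (2 * k) : ℝ≥0) : ℝ≥0∞) := by norm_cast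
        _ ≤ ((‖a ^ k‖₊ * ‖b ^ k‖₊ : ℝ≥0) : ℝ≥0∞) := by exact_mod_cast h2
        _ = (‖a ^ k‖₊ : ℝ≥0∞) * ‖b ^ k‖₊ := by norm_cast
    have hk0 : (k : ℝ) ≠ 0 := by positivity
    calc ((‖μ‖₊ : ℝ≥0∞)) ^ (2 : ℕ)
        = (((‖μ‖₊ : ℝ≥0∞)) ^ ((2 * k : ℕ) : ℝ)) ^ (1 / k : ℝ) := by
          rw [← ENNReal.rpow_natCast (‖μ‖₊ : ℝ≥0∞) 2, ← ENNReal.rpow_mul]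
          congr 1
          push_cast
          field_simp
      _ ≤ ((‖a ^ k‖₊ : ℝ≥0∞) * ‖b ^ k‖₊) ^ (1 / k : ℝ) := by
          apply ENNReal.rpow_le_rpow h3 (by positivity)
      _ = (‖a ^ k‖₊ : ℝ≥0∞) ^ (1 / k : ℝ) * (‖b ^ k‖₊ : ℝ≥0∞) ^ (1 / k : ℝ) :=
          ENNReal.mul_rpow_of_ne_top coe_ne_top coe_ne_top _
  have := ENNReal.toReal_mono (by exact ENNReal.mul_ne_top hLa hLb) key
  rw [ENNReal.toReal_mul] at this
  calc ‖μ‖ ^ 2 = (((‖μ‖₊ : ℝ≥0∞)) ^ (2 : ℕ)).toReal := by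
        simp [ENNReal.toReal_pow]
    _ ≤ _ := this

lemma spectralRadius_toReal_le_specRad [Nonempty (Fin n)] (a : Matrix (Fin n) (Fin n) ℂ) :
    (spectralRadius ℂ a).toReal ≤ specRad a := by
  obtain ⟨μ₀, hμ₀⟩ := spectrum.nonempty a
  have hbdd : BddAbove ((fun z : ℂ => ‖z‖) '' spectrum ℂ a) := by
    refine ⟨‖a‖, ?_⟩
    rintro x ⟨μ, hμ, rfl⟩
    exact spectrum.norm_le_norm_of_mem hμ
  have hs0 : 0 ≤ specRad a :=
    le_trans (norm_nonneg μ₀) (le_csSup hbdd (Set.mem_image_of_mem _ hμ₀))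
  have hle : spectralRadius ℂ a ≤ ENNReal.ofReal (specRad a) := by
    rw [spectralRadius]
    refine iSup₂_le fun μ hμ => ?_
    have : ‖μ‖ ≤ specRad a := le_csSup hbdd (Set.mem_image_of_mem _ hμ)
    calc ((‖μ‖₊ : ℝ≥0∞)) = ENNReal.ofReal ‖μ‖ := by
          rw [ofReal_norm, enorm_eq_nnnorm]
      _ ≤ ENNReal.ofReal (specRad a) := ENNReal.ofReal_le_ofReal this
  calc (spectralRadius ℂ a).toReal ≤ (ENNReal.ofReal (specRad a)).toReal :=
        ENNReal.toReal_mono ENNReal.ofReal_ne_top hle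
    _ = specRad a := ENNReal.toReal_ofReal hs0

/-- Cauchy–Schwarz inequality for spectral radii: if `A, B` have nonnegative
entries and `C i j ≤ √(A i j * B i j)`, then `ρ(C) ≤ √(ρ(A) ρ(B))`. -/
theorem cauchy_schwarz_spectral_radius {n : ℕ} (A B C : Matrix (Fin n) (Fin n) ℝ)
    (hA : ∀ i j, 0 ≤ A i j) (hB : ∀ i j, 0 ≤ B i j) (hC : ∀ i j, 0 ≤ C i j)
    (h : ∀ i j, C i j ≤ Real.sqrt (A i j * B i j)) :
    specRad (C.map Complex.ofReal) ≤
      Real.sqrt (specRad (A.map Complex.ofReal) * specRad (B.map Complex.ofReal)) := by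
  rcases Nat.eq_zero_or_pos n with hn | hn
  · subst hn
    have : spectrum ℂ (C.map Complex.ofReal) = ∅ := by
      ext μ
      simp only [spectrum.mem_iff, Set.mem_empty_iff_false, iff_false, not_not]
      exact isUnit_of_subsingleton _
    rw [specRad, this, Set.image_empty, Real.sSup_empty]
    exact Real.sqrt_nonneg _
  · have : Nonempty (Fin n) := ⟨⟨0, hn⟩⟩
    set a := A.map Complex.ofReal
    set b := B.map Complex.ofReal
    set c := C.map Complex.ofReal
    have hmap : ∀ (M : Matrix (Fin n) (Fin n) ℝ) (k : ℕ),
        (M.map Complex.ofReal) ^ k = (M ^ k).map Complex.ofReal := by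
      intro M k
      have := map_pow (Complex.ofRealHom.mapMatrix (m := Fin n)) M k
      simp only [RingHom.mapMatrix_apply] at this
      exact this.symm
    have hnorm : ∀ k : ℕ, ‖c ^ k‖ ^ 2 ≤ ‖a ^ k‖ * ‖b ^ k‖ := by
      intro k
      have h1 : ‖(C ^ k).map Complex.ofReal‖ ≤
          Real.sqrt (‖(A ^ k).map Complex.ofReal‖ * ‖(B ^ k).map Complex.ofReal‖) :=
        norm_map_le_sqrt (pow_entry_nonneg hA k) (pow_entry_nonneg hB k)
          (pow_entry_nonneg hC k) (pow_entry_cs hA hB hC h k)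
      rw [show c ^ k = (C ^ k).map Complex.ofReal from hmap C k,
        show a ^ k = (A ^ k).map Complex.ofReal from hmap A k,
        show b ^ k = (B ^ k).map Complex.ofReal from hmap B k]
      calc ‖(C ^ k).map Complex.ofReal‖ ^ 2
          ≤ Real.sqrt (‖(A ^ k).map Complex.ofReal‖ * ‖(B ^ k).map Complex.ofReal‖) ^ 2 :=
            pow_le_pow_left₀ (norm_nonneg _) h1 2
        _ = _ := Real.sq_sqrt (mul_nonneg (norm_nonneg _) (norm_nonneg _))
    have hsA : 0 ≤ specRad a := le_trans ENNReal.toReal_nonneg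
      (spectralRadius_toReal_le_specRad a)
    have hsB : 0 ≤ specRad b := le_trans ENNReal.toReal_nonneg
      (spectralRadius_toReal_le_specRad b)
    apply Real.sSup_le _ (Real.sqrt_nonneg _)
    rintro x ⟨μ, hμ, rfl⟩
    have hsq : ‖μ‖ ^ 2 ≤
        (spectralRadius ℂ a).toReal * (spectralRadius ℂ b).toReal :=
      abs_sq_le_of_norm_pow a b c hnorm hμ
    have : ‖μ‖ ≤
        Real.sqrt ((spectralRadius ℂ a).toReal * (spectralRadius ℂ b).toReal) :=
      Real.le_sqrt_of_sq_le hsq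
    refine this.trans (Real.sqrt_le_sqrt ?_)
    exact mul_le_mul (spectralRadius_toReal_le_specRad a)
      (spectralRadius_toReal_le_specRad b) ENNReal.toReal_nonneg hsA

end Aux
end

section
/- Let g_1, ..., g_k ∈ C with Im(g_a) ≥ 0 for all a, let C_1, ..., C_k be positive semidefinite p×p real symmetric matrices, c_1,...,c_k ≥ 0, and let C_0 be positive semidefinite. Then Im tr( C_0 (I_p + Σ_{b=1}^k c_b g_b C_b)^{-1} ) ≤ 0, assuming the inverse exists. -/
open Matrix

section Aux
open ComplexOrder
open scoped MatrixOrder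

lemma psd_diag_nonneg {n : ℕ} {M : Matrix (Fin n) (Fin n) ℂ} (hM : M.PosSemidef) (i : Fin n) :
    0 ≤ M i i := by
  have h := hM.dotProduct_mulVec_nonneg (Pi.single i 1)
  simpa [Matrix.mulVec_single, dotProduct, Pi.single_apply, apply_ite] using h

lemma psd_trace_nonneg {n : ℕ} {M : Matrix (Fin n) (Fin n) ℂ} (hM : M.PosSemidef) :
    0 ≤ M.trace :=
  Finset.sum_nonneg fun i _ => psd_diag_nonneg hM i

lemma trace_psd_mul_nonneg {n : ℕ} {A B : Matrix (Fin n) (Fin n) ℂ}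
    (hA : A.PosSemidef) (hB : B.PosSemidef) : 0 ≤ (A * B).trace := by
  obtain ⟨X, rfl⟩ := CStarAlgebra.nonneg_iff_eq_star_mul_self.mp hA.nonneg
  rw [star_eq_conjTranspose]
  rw [Matrix.mul_assoc, trace_mul_comm]
  have h2 := psd_trace_nonneg (hB.mul_mul_conjTranspose_same X)
  exact h2

lemma psd_map {n : ℕ} {M : Matrix (Fin n) (Fin n) ℝ} (hM : M.PosSemidef) :
    (M.map Complex.ofReal).PosSemidef := by
  obtain ⟨X, rfl⟩ := CStarAlgebra.nonneg_iff_eq_star_mul_self.mp hM.nonneg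
  rw [star_eq_conjTranspose]
  have h : (Xᴴ * X).map Complex.ofReal = (X.map Complex.ofReal)ᴴ * (X.map Complex.ofReal) := by
    ext i j
    simp [Matrix.mul_apply, Matrix.conjTranspose_apply, Complex.conj_ofReal]
  rw [h]
  exact posSemidef_conjTranspose_mul_self _

lemma psd_smul_c {n : ℕ} {M : Matrix (Fin n) (Fin n) ℂ} (hM : M.PosSemidef) {r : ℝ} (hr : 0 ≤ r) :
    ((r : ℂ) • M).PosSemidef := by
  rw [posSemidef_iff_dotProduct_mulVec]
  constructor
  · unfold Matrix.IsHermitian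
    rw [conjTranspose_smul, hM.1]
    congr 1
    simp
  · intro x
    have h := hM.dotProduct_mulVec_nonneg x
    rw [smul_mulVec, dotProduct_smul]
    rw [Complex.le_def] at h ⊢
    obtain ⟨h1, h2⟩ := h
    simp only [Complex.zero_re, Complex.zero_im, smul_eq_mul, Complex.mul_re,
      Complex.mul_im, Complex.ofReal_re, Complex.ofReal_im] at *
    constructor
    · nlinarith
    · rw [← h2]; ring

lemma psd_sum {n k : ℕ} (f : Fin k → Matrix (Fin n) (Fin n) ℂ) (h : ∀ a, (f a).PosSemidef) :
    (∑ a, f a).PosSemidef :=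
  Finset.sum_induction f _ (fun _ _ ha hb => ha.add hb) Matrix.PosSemidef.zero (fun a _ => h a)

theorem trace_inverse_im_nonpos_aux {p k : ℕ} (g : Fin k → ℂ) (hg : ∀ a, 0 ≤ (g a).im)
    (c : Fin k → ℝ) (hc : ∀ a, 0 ≤ c a)
    (C : Fin k → Matrix (Fin p) (Fin p) ℝ) (hC : ∀ a, (C a).PosSemidef)
    (C0 : Matrix (Fin p) (Fin p) ℝ) (hC0 : C0.PosSemidef)
    (hinv : IsUnit ((1 : Matrix (Fin p) (Fin p) ℂ) +
      ∑ b, ((c b : ℂ) * g b) • (C b).map Complex.ofReal)) :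
    ((C0.map Complex.ofReal *
      ((1 : Matrix (Fin p) (Fin p) ℂ) +
        ∑ b, ((c b : ℂ) * g b) • (C b).map Complex.ofReal)⁻¹).trace).im ≤ 0 := by
  set C0' := C0.map Complex.ofReal with hC0'def
  set N : Matrix (Fin p) (Fin p) ℂ :=
    1 + ∑ b, ((c b : ℂ) * g b) • (C b).map Complex.ofReal with hNdef
  set B : Matrix (Fin p) (Fin p) ℂ :=
    ∑ b, ((c b * (g b).im : ℝ) : ℂ) • (C b).map Complex.ofReal with hBdef
  have hBpsd : B.PosSemidef :=
    psd_sum _ (fun b => psd_smul_c (psd_map (hC b)) (mul_nonneg (hc b) (hg b)))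
  have hCherm : ∀ b, ((C b).map Complex.ofReal)ᴴ = (C b).map Complex.ofReal := by
    intro b
    ext i j
    simp only [conjTranspose_apply, Matrix.map_apply, Complex.star_def, Complex.conj_ofReal]
    exact congrArg _ (by simpa using (hC b).1.apply i j)
  have hC0herm : C0'ᴴ = C0' := by
    rw [hC0'def]
    ext i j
    simp only [conjTranspose_apply, Matrix.map_apply, Complex.star_def, Complex.conj_ofReal]
    exact congrArg _ (by simpa using hC0.1.apply i j)
  have hNdet : IsUnit N.det := N.isUnit_iff_isUnit_det.mp hinv
  have hNHdet : IsUnit Nᴴ.det := by rw [Matrix.det_conjTranspose]; exact hNdet.star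
  have hNH : Nᴴ = 1 + ∑ b, ((c b : ℂ) * (starRingEnd ℂ) (g b)) • (C b).map Complex.ofReal := by
    rw [hNdef, conjTranspose_add, conjTranspose_one, conjTranspose_sum]
    congr 1
    refine Finset.sum_congr rfl fun b _ => ?_
    rw [conjTranspose_smul, hCherm]
    congr 1
    simp [Complex.conj_ofReal, mul_comm]
  have hdiff : Nᴴ - N = -((2 * Complex.I) • B) := by
    rw [hNH, hNdef, hBdef, add_sub_add_left_eq_sub, Finset.smul_sum, ← Finset.sum_sub_distrib,
      ← Finset.sum_neg_distrib]
    refine Finset.sum_congr rfl fun b _ => ?_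
    rw [smul_smul, ← sub_smul, ← neg_smul]
    congr 1
    have hcast : ((c b * (g b).im : ℝ) : ℂ) = (c b : ℂ) * ((g b).im : ℂ) := by push_cast; ring
    rw [hcast]
    apply Complex.ext <;>
      simp [Complex.mul_re, Complex.mul_im] <;> ring
  have hid : N⁻¹ * (Nᴴ - N) * Nᴴ⁻¹ = N⁻¹ - Nᴴ⁻¹ := by
    rw [Matrix.mul_sub, Matrix.sub_mul, Matrix.mul_assoc N⁻¹ Nᴴ Nᴴ⁻¹,
      Matrix.mul_nonsing_inv _ hNHdet, Matrix.mul_one, Matrix.nonsing_inv_mul _ hNdet,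
      Matrix.one_mul]
  have hstar : star ((C0' * N⁻¹).trace) = (C0' * Nᴴ⁻¹).trace := by
    rw [← trace_conjTranspose, conjTranspose_mul, conjTranspose_nonsing_inv, hC0herm,
      trace_mul_comm]
  set w := (C0' * (N⁻¹ * B * N⁻¹ᴴ)).trace with hwdef
  have hwnn : (0 : ℂ) ≤ w := by
    rw [hwdef]
    exact trace_psd_mul_nonneg (psd_map hC0) (hBpsd.mul_mul_conjTranspose_same N⁻¹)
  have hm : C0' * (N⁻¹ * (Nᴴ - N) * Nᴴ⁻¹) = -((2 * Complex.I) • (C0' * (N⁻¹ * B * N⁻¹ᴴ))) := by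
    rw [hdiff, ← conjTranspose_nonsing_inv]
    simp [Matrix.mul_smul, Matrix.smul_mul, Matrix.mul_neg, Matrix.neg_mul, Matrix.mul_assoc]
  have hkey : (C0' * N⁻¹).trace - star ((C0' * N⁻¹).trace) = -(2 * Complex.I) * w := by
    rw [hstar, ← trace_sub, ← Matrix.mul_sub, ← hid, hm, trace_neg, trace_smul, ← hwdef,
      smul_eq_mul]
    ring
  have him := congrArg Complex.im hkey
  have hw0 : w.im = 0 ∧ 0 ≤ w.re := by
    rw [Complex.le_def] at hwnn
    exact ⟨hwnn.2.symm, by simpa using hwnn.1⟩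
  simp only [Complex.sub_im, Complex.star_def, Complex.conj_im, Complex.neg_im, Complex.neg_re,
    Complex.mul_im, Complex.mul_re, Complex.I_re, Complex.I_im, Complex.re_ofNat,
    Complex.im_ofNat, hw0.1] at him
  have hre := hw0.2
  linarith [him]

end Aux

/-- If `Im g_a ≥ 0`, `c_a ≥ 0`, the `C_a` and `C_0` are real positive
semidefinite, and `I + ∑ c_b g_b C_b` is invertible, then
`Im tr(C_0 (I + ∑ c_b g_b C_b)⁻¹) ≤ 0`. -/
theorem trace_inverse_im_nonpos {p k : ℕ} (g : Fin k → ℂ) (hg : ∀ a, 0 ≤ (g a).im)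
    (c : Fin k → ℝ) (hc : ∀ a, 0 ≤ c a)
    (C : Fin k → Matrix (Fin p) (Fin p) ℝ) (hC : ∀ a, (C a).PosSemidef)
    (C0 : Matrix (Fin p) (Fin p) ℝ) (hC0 : C0.PosSemidef)
    (hinv : IsUnit ((1 : Matrix (Fin p) (Fin p) ℂ) +
      ∑ b, ((c b : ℂ) * g b) • (C b).map Complex.ofReal)) :
    ((C0.map Complex.ofReal *
      ((1 : Matrix (Fin p) (Fin p) ℂ) +
        ∑ b, ((c b : ℂ) * g b) • (C b).map Complex.ofReal)⁻¹).trace).im ≤ 0 :=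
  trace_inverse_im_nonpos_aux g hg c hc C hC C0 hC0 hinv
end

section
/- Let (L, d) be the set of analytic functions g : C^+ → C satisfying for all z ∈ C^+: Im g(z) ≥ 0, Im(z g(z)) ≥ 0, and c_0 |g(z)| ≤ (Im z)^{-1} (for a fixed constant c_0 > 0), equipped with the distance d_η(g, h) = sup_{Im z ≥ η} |h(z) − g(z)| for fixed η > 0. Then d_η is a complete metric on L. -/
open Complex Set Filter Topology

/-- The open upper half-plane. -/
def UHP : Set ℂ := {z | 0 < z.im}


/-- The class `L` of functions: analytic on `ℂ⁺`, with `Im g(z) ≥ 0`,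
`Im(z g(z)) ≥ 0` and `c₀ |g(z)| ≤ (Im z)⁻¹` on `ℂ⁺` (we normalize the
functions to vanish off `ℂ⁺`, so that `L` is a set of functions on `ℂ⁺`). -/
def GoodFun (c0 : ℝ) (g : ℂ → ℂ) : Prop :=
  AnalyticOn ℂ g UHP ∧
    (∀ z ∈ UHP, 0 ≤ (g z).im ∧ 0 ≤ (z * g z).im ∧
      c0 * ‖g z‖ ≤ (z.im)⁻¹) ∧
    ∀ z, z ∉ UHP → g z = 0

lemma uhp_open : IsOpen UHP := isOpen_lt continuous_const Complex.continuous_im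

lemma stepdown {d : ℂ → ℂ} (hd : DifferentiableOn ℂ d UHP)
    {a b B ε : ℝ} (ha : 0 < a) (hab : a < b)
    (hB : ∀ z : ℂ, a ≤ z.im → ‖d z‖ ≤ B)
    (hε : ∀ z : ℂ, z.im = b → ‖d z‖ ≤ ε)
    {z : ℂ} (hz1 : a ≤ z.im) (hz2 : z.im ≤ b) :
    ‖d z‖ ≤ B ^ (1 - (z.im - a) / (b - a)) * ε ^ ((z.im - a) / (b - a)) := by
  have hs : (0:ℝ) < b - a := by linarith
  set s : ℝ := b - a with hsdef
  set φ : ℂ → ℂ := fun w => ((a : ℂ) + (s : ℂ) * w) * I with hφ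
  have him : ∀ w : ℂ, (φ w).im = a + s * w.re := by
    intro w
    simp [hφ, Complex.add_im, Complex.add_re, Complex.mul_im, Complex.mul_re]
  have hφdiff : Differentiable ℂ φ :=
    (((differentiable_const _).add ((differentiable_const _).mul differentiable_id)).mul
      (differentiable_const I))
  have hmapscl : ∀ w ∈ Complex.HadamardThreeLines.verticalClosedStrip 0 1, a ≤ (φ w).im ∧ (φ w).im ≤ b := by
    intro w hw
    have h1 : 0 ≤ w.re := hw.1
    have h2 : w.re ≤ 1 := hw.2
    rw [him]
    constructor <;> nlinarith
  have hclsub : closure (Complex.HadamardThreeLines.verticalStrip 0 1) ⊆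
      Complex.HadamardThreeLines.verticalClosedStrip 0 1 := by
    apply closure_minimal
    · intro w hw; exact ⟨le_of_lt hw.1, le_of_lt hw.2⟩
    · exact IsClosed.preimage Complex.continuous_re isClosed_Icc
  have hdiffcl : DiffContOnCl ℂ (d ∘ φ) (Complex.HadamardThreeLines.verticalStrip 0 1) := by
    apply DifferentiableOn.diffContOnCl
    apply DifferentiableOn.comp hd (hφdiff.differentiableOn)
    intro w hw
    have := hmapscl w (hclsub hw)
    exact lt_of_lt_of_le ha this.1
  have hbdd : BddAbove ((norm ∘ (d ∘ φ)) '' Complex.HadamardThreeLines.verticalClosedStrip 0 1) := by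
    refine ⟨B, ?_⟩
    rintro y ⟨w, hw, rfl⟩
    exact hB _ (hmapscl w hw).1
  have ha' : ∀ w ∈ Complex.re ⁻¹' {(0:ℝ)}, ‖(d ∘ φ) w‖ ≤ B := by
    intro w hw
    apply hB
    rw [him, hw]
    simp
  have hb' : ∀ w ∈ Complex.re ⁻¹' {(1:ℝ)}, ‖(d ∘ φ) w‖ ≤ ε := by
    intro w hw
    apply le_of_eq_of_le rfl (hε _ ?_)
    rw [him, hw]
    simp [hsdef]
  set x : ℝ := (z.im - a) / s with hx
  have hx0 : 0 ≤ x := div_nonneg (by linarith) hs.le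
  have hx1 : x ≤ 1 := by
    rw [hx, div_le_one hs]; linarith
  set w₀ : ℂ := (x : ℂ) + (↑(-(z.re / s)) : ℂ) * I with hw₀
  have hw₀re : w₀.re = x := by simp [hw₀]
  have hφw₀ : φ w₀ = z := by
    have hs0 : (s : ℂ) ≠ 0 := by
      simp only [ne_eq, ofReal_eq_zero]; linarith
    rw [hφ, hw₀, hx]
    push_cast
    field_simp
    ring_nf
    simp [Complex.I_sq]
    rw [add_comm]
    rw [mul_comm]
    exact Complex.re_add_im z
  have hmem : w₀ ∈ Complex.HadamardThreeLines.verticalClosedStrip 0 1 := by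
    constructor <;> rw [hw₀re] <;> assumption
  have key := Complex.HadamardThreeLines.norm_le_interp_of_mem_verticalClosedStrip'
    (f := d ∘ φ) zero_lt_one hmem hdiffcl hbdd ha' hb'
  rw [hw₀re] at key
  simpa [hφw₀] using key

section Aux

variable {c0 η : ℝ}

lemma goodfun_abs_le (hc0 : 0 < c0) {g : ℂ → ℂ} (hg : GoodFun c0 g)
    {t : ℝ} (ht : 0 < t) {z : ℂ} (hz : t ≤ z.im) :
    ‖g z‖ ≤ (c0 * t)⁻¹ := by
  have hzU : z ∈ UHP := lt_of_lt_of_le ht hz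
  have h1 : c0 * ‖g z‖ ≤ (z.im)⁻¹ := (hg.2.1 z hzU).2.2
  have h2 : (z.im)⁻¹ ≤ t⁻¹ := by
    apply inv_anti₀ ht hz
  have h3 : c0 * ‖g z‖ ≤ t⁻¹ := h1.trans h2
  rw [mul_inv]
  rw [← mul_le_mul_iff_right₀ hc0, ← mul_assoc, mul_inv_cancel₀ hc0.ne', one_mul]
  exact h3.trans (le_of_eq rfl)

lemma goodfun_diff {g : ℂ → ℂ} (hg : GoodFun c0 g) : DifferentiableOn ℂ g UHP :=
  ((uhp_open.analyticOn_iff_analyticOnNhd).mp hg.1).differentiableOn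

/-- the index type of the sup is nonempty -/
theorem instNEidx (hη : 0 < η) : Nonempty {z : ℂ // η ≤ z.im} := ⟨⟨(η : ℂ) * I, by simp⟩⟩

noncomputable def Ldist (c0 η : ℝ) (g h : {g : ℂ → ℂ // GoodFun c0 g}) : ℝ :=
  ⨆ z : {z : ℂ // η ≤ z.im}, ‖h.1 z - g.1 z‖

lemma Ldist_term_bdd (hc0 : 0 < c0) (hη : 0 < η) (g h : {g : ℂ → ℂ // GoodFun c0 g})
    (z : {z : ℂ // η ≤ z.im}) :
    ‖h.1 z - g.1 z‖ ≤ 2 * (c0 * η)⁻¹ := by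
  calc ‖h.1 z - g.1 z‖ ≤ ‖h.1 z‖ + ‖g.1 z‖ :=
        norm_sub_le _ _
    _ ≤ (c0 * η)⁻¹ + (c0 * η)⁻¹ :=
        add_le_add (goodfun_abs_le hc0 h.2 hη z.2) (goodfun_abs_le hc0 g.2 hη z.2)
    _ = 2 * (c0 * η)⁻¹ := by ring

lemma Ldist_bddAbove (hc0 : 0 < c0) (hη : 0 < η) (g h : {g : ℂ → ℂ // GoodFun c0 g}) :
    BddAbove (Set.range fun z : {z : ℂ // η ≤ z.im} => ‖h.1 z - g.1 z‖) := by
  refine ⟨2 * (c0 * η)⁻¹, ?_⟩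
  rintro y ⟨z, rfl⟩
  exact Ldist_term_bdd hc0 hη g h z

lemma le_Ldist (hc0 : 0 < c0) (hη : 0 < η) (g h : {g : ℂ → ℂ // GoodFun c0 g})
    (z : {z : ℂ // η ≤ z.im}) :
    ‖h.1 z - g.1 z‖ ≤ Ldist c0 η g h :=
  le_ciSup (Ldist_bddAbove hc0 hη g h) z

lemma Ldist_le (hη : 0 < η) {g h : {g : ℂ → ℂ // GoodFun c0 g}} {C : ℝ}
    (hC : ∀ z : {z : ℂ // η ≤ z.im}, ‖h.1 z - g.1 z‖ ≤ C) :
    Ldist c0 η g h ≤ C := by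
  haveI := instNEidx hη
  exact ciSup_le hC

lemma eq_of_Ldist_eq_zero (hc0 : 0 < c0) (hη : 0 < η) {g h : {g : ℂ → ℂ // GoodFun c0 g}}
    (h0 : Ldist c0 η g h = 0) : g = h := by
  have hzero : ∀ z : ℂ, η ≤ z.im → g.1 z = h.1 z := by
    intro z hz
    have h1 := le_Ldist hc0 hη g h ⟨z, hz⟩
    rw [h0] at h1
    have h2 : ‖h.1 z - g.1 z‖ = 0 :=
      le_antisymm h1 (norm_nonneg _)
    have := norm_eq_zero.mp h2
    linear_combination -this
  have hganal : AnalyticOnNhd ℂ g.1 UHP := (uhp_open.analyticOn_iff_analyticOnNhd).mp g.2.1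
  have hhanal : AnalyticOnNhd ℂ h.1 UHP := (uhp_open.analyticOn_iff_analyticOnNhd).mp h.2.1
  have hpre : IsPreconnected UHP := (convex_halfSpace_im_gt 0).isPreconnected
  set z₀ : ℂ := (↑(2 * η) : ℂ) * I with hz₀
  have hz₀im : z₀.im = 2 * η := by simp [hz₀]
  have hz₀U : z₀ ∈ UHP := by
    show (0:ℝ) < z₀.im
    rw [hz₀im]; linarith
  have hev : g.1 =ᶠ[𝓝 z₀] h.1 := by
    have hopen : {z : ℂ | η < z.im} ∈ 𝓝 z₀ := by
      apply (isOpen_lt continuous_const Complex.continuous_im).mem_nhds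
      show η < z₀.im
      rw [hz₀im]; linarith
    filter_upwards [hopen] with z hz using hzero z hz.le
  have heq := hganal.eqOn_of_preconnected_of_eventuallyEq hhanal hpre hz₀U hev
  apply Subtype.ext
  funext z
  by_cases hzU : z ∈ UHP
  · exact heq hzU
  · rw [g.2.2.2 z hzU, h.2.2.2 z hzU]

noncomputable def Lmetric (hc0 : 0 < c0) (hη : 0 < η) :
    MetricSpace {g : ℂ → ℂ // GoodFun c0 g} where
  dist := Ldist c0 η
  dist_self g := by
    haveI := instNEidx hη
    simp [Ldist]
  dist_comm g h := by
    show Ldist c0 η g h = Ldist c0 η h g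
    unfold Ldist
    have : (fun z : {z : ℂ // η ≤ z.im} => ‖h.1 z - g.1 z‖) =
        (fun z : {z : ℂ // η ≤ z.im} => ‖g.1 z - h.1 z‖) :=
      funext fun z => norm_sub_rev _ _
    rw [this]
  dist_triangle g h k := by
    apply Ldist_le hη
    intro z
    calc ‖k.1 z - g.1 z‖
        ≤ ‖h.1 z - g.1 z‖ + ‖k.1 z - h.1 z‖ := by
          have : k.1 z - g.1 z = (h.1 z - g.1 z) + (k.1 z - h.1 z) := by ring
          rw [this]; exact norm_add_le _ _
      _ ≤ Ldist c0 η g h + Ldist c0 η h k :=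
          add_le_add (le_Ldist hc0 hη g h z) (le_Ldist hc0 hη h k z)
  eq_of_dist_eq_zero := fun h0 => eq_of_Ldist_eq_zero hc0 hη h0

end Aux

/-- The distance `d_η(g,h) = sup_{Im z ≥ η} |h(z) − g(z)|` is a complete
metric on `L`. -/
theorem dist_eta_complete_metric (c0 η : ℝ) (hc0 : 0 < c0) (hη : 0 < η) :
    ∃ m : MetricSpace {g : ℂ → ℂ // GoodFun c0 g},
      (∀ g h : {g : ℂ → ℂ // GoodFun c0 g},
        m.dist g h = ⨆ z : {z : ℂ // η ≤ z.im}, ‖h.1 z - g.1 z‖) ∧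
      @CompleteSpace {g : ℂ → ℂ // GoodFun c0 g}
        m.toPseudoMetricSpace.toUniformSpace := by
  letI m := Lmetric hc0 hη
  refine ⟨m, fun g h => rfl, ?_⟩
  apply Metric.complete_of_cauchySeq_tendsto
  intro u hu
  rw [Metric.cauchySeq_iff] at hu
  -- Step A: uniform Cauchy on every `{Im ≥ t}`, `t > 0`.
  have key : ∀ t : ℝ, 0 < t →
      UniformCauchySeqOn (fun n z => (u n).1 z) atTop {z : ℂ | t ≤ z.im} := by
    intro t ht
    rw [Metric.uniformCauchySeqOn_iff]
    intro ε' hε'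
    rcases le_or_gt η t with hcase | hcase
    · obtain ⟨N, hN⟩ := hu ε' hε'
      refine ⟨N, fun m hm n hn z hz => ?_⟩
      have h1 : η ≤ z.im := le_trans hcase hz
      have h3 : Ldist c0 η (u n) (u m) < ε' := hN n hn m hm
      calc dist ((u m).1 z) ((u n).1 z)
          = ‖(u m).1 z - (u n).1 z‖ := Complex.dist_eq _ _
        _ ≤ Ldist c0 η (u n) (u m) := le_Ldist hc0 hη (u n) (u m) ⟨z, h1⟩
        _ < ε' := h3
    · have ha : 0 < t/2 := by linarith
      have hab : t/2 < η := by linarith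
      set B : ℝ := 2 * (c0 * (t/2))⁻¹ with hBdef
      have hBpos : 0 < B := by positivity
      set B' : ℝ := max B 1 with hB'def
      have hB'1 : (1:ℝ) ≤ B' := le_max_right _ _
      have hB'pos : (0:ℝ) < B' := lt_of_lt_of_le one_pos hB'1
      set θ : ℝ := (t - t/2) / (η - t/2) with hθdef
      have hθpos : 0 < θ := div_pos (by linarith) (by linarith)
      set δ : ℝ := ε' / (2 * B') with hδdef
      have hδpos : 0 < δ := by positivity
      set ε : ℝ := min (ε'/2) (min 1 (δ ^ θ⁻¹)) with hεdef
      have hεpos : 0 < ε := lt_min (by linarith) (lt_min one_pos (Real.rpow_pos_of_pos hδpos _))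
      have hε1 : ε ≤ 1 := le_trans (min_le_right _ _) (min_le_left _ _)
      have hεδ : ε ^ θ ≤ δ := by
        have h1 : ε ≤ δ ^ θ⁻¹ := le_trans (min_le_right _ _) (min_le_right _ _)
        calc ε ^ θ ≤ (δ ^ θ⁻¹) ^ θ := Real.rpow_le_rpow hεpos.le h1 hθpos.le
          _ = δ := by
            rw [← Real.rpow_mul hδpos.le, inv_mul_cancel₀ hθpos.ne', Real.rpow_one]
      obtain ⟨N, hN⟩ := hu ε hεpos
      refine ⟨N, fun m hm n hn z hz => ?_⟩
      have hz' : t ≤ z.im := hz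
      have hLd : Ldist c0 η (u n) (u m) < ε := hN n hn m hm
      rcases le_or_gt η z.im with hzim | hzim
      · calc dist ((u m).1 z) ((u n).1 z)
            = ‖(u m).1 z - (u n).1 z‖ := Complex.dist_eq _ _
          _ ≤ Ldist c0 η (u n) (u m) := le_Ldist hc0 hη (u n) (u m) ⟨z, hzim⟩
          _ < ε := hLd
          _ ≤ ε' := le_trans (min_le_left _ _) (by linarith)
      · have hdiff : DifferentiableOn ℂ (fun w => (u m).1 w - (u n).1 w) UHP :=
          (goodfun_diff (u m).2).sub (goodfun_diff (u n).2)
        have hBbd : ∀ w : ℂ, t/2 ≤ w.im →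
            ‖(u m).1 w - (u n).1 w‖ ≤ B := by
          intro w hw
          calc ‖(u m).1 w - (u n).1 w‖
              ≤ ‖(u m).1 w‖ + ‖(u n).1 w‖ :=
                norm_sub_le _ _
            _ ≤ (c0*(t/2))⁻¹ + (c0*(t/2))⁻¹ :=
                add_le_add (goodfun_abs_le hc0 (u m).2 ha hw)
                  (goodfun_abs_le hc0 (u n).2 ha hw)
            _ = B := by rw [hBdef]; ring
        have hεbd : ∀ w : ℂ, w.im = η →
            ‖(u m).1 w - (u n).1 w‖ ≤ ε := by
          intro w hw
          exact le_of_lt (lt_of_le_of_lt (le_Ldist hc0 hη (u n) (u m) ⟨w, hw.ge⟩) hLd)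
        have hsd := stepdown hdiff ha hab hBbd hεbd
          (le_trans (by linarith : t/2 ≤ t) hz') hzim.le
        set x : ℝ := (z.im - t/2) / (η - t/2) with hxdef
        have hxθ : θ ≤ x := by
          have hden : (0:ℝ) < η - t/2 := by linarith
          rw [hθdef, hxdef, div_le_div_iff₀ hden hden]
          nlinarith
        have hx1 : x ≤ 1 := by
          rw [hxdef, div_le_one (by linarith)]; linarith
        have hb1 : B ^ (1 - x) ≤ B' := by
          rcases le_or_gt B 1 with hB1 | hB1
          · exact le_trans (Real.rpow_le_one hBpos.le hB1 (by linarith)) hB'1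
          · calc B ^ (1-x) ≤ B ^ (1:ℝ) :=
                  Real.rpow_le_rpow_of_exponent_le hB1.le (by linarith)
              _ = B := Real.rpow_one B
              _ ≤ B' := le_max_left _ _
        have hb2 : ε ^ x ≤ ε ^ θ := Real.rpow_le_rpow_of_exponent_ge hεpos hε1 hxθ
        have final : ‖(u m).1 z - (u n).1 z‖ ≤ B' * δ := by
          calc ‖(u m).1 z - (u n).1 z‖
              ≤ B ^ (1-x) * ε ^ x := hsd
            _ ≤ B' * ε ^ θ :=
                mul_le_mul hb1 hb2 (Real.rpow_nonneg hεpos.le _)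
                  hB'pos.le
            _ ≤ B' * δ := mul_le_mul_of_nonneg_left hεδ hB'pos.le
        have hfin2 : B' * δ < ε' := by
          have hBδ : B' * δ = ε'/2 := by
            rw [hδdef]; field_simp
          rw [hBδ]; linarith
        calc dist ((u m).1 z) ((u n).1 z)
            = ‖(u m).1 z - (u n).1 z‖ := Complex.dist_eq _ _
          _ ≤ B' * δ := final
          _ < ε' := hfin2
  -- Step B: pointwise limit
  have cauchyPt : ∀ z : ℂ, z ∈ UHP → CauchySeq (fun n => (u n).1 z) := by
    intro z hz
    exact (key z.im hz).cauchySeq (by simp : z ∈ {w : ℂ | z.im ≤ w.im})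
  set G : ℂ → ℂ := fun z => limUnder atTop (fun n => (u n).1 z) with hGdef
  have hGtend : ∀ z ∈ UHP, Tendsto (fun n => (u n).1 z) atTop (𝓝 (G z)) := by
    intro z hz
    exact (cauchyPt z hz).tendsto_limUnder
  have hG0 : ∀ z, z ∉ UHP → G z = 0 := by
    intro z hz
    have hconst : (fun n : ℕ => (u n).1 z) = fun _ => (0:ℂ) :=
      funext fun n => (u n).2.2.2 z hz
    rw [hGdef]
    simp only
    rw [hconst]
    exact Filter.Tendsto.limUnder_eq tendsto_const_nhds
  -- Step C/D : locally uniform convergence on UHP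
  have hTU : ∀ t : ℝ, 0 < t →
      TendstoUniformlyOn (fun n z => (u n).1 z) G atTop {z : ℂ | t ≤ z.im} := by
    intro t ht
    exact (key t ht).tendstoUniformlyOn_of_tendsto
      fun z hz => hGtend z (lt_of_lt_of_le ht hz)
  have hTLU : TendstoLocallyUniformlyOn (fun n z => (u n).1 z) G atTop UHP := by
    rw [tendstoLocallyUniformlyOn_iff_forall_isCompact uhp_open]
    intro K hKU hK
    rcases K.eq_empty_or_nonempty with rfl | hne
    · exact (hTU 1 one_pos).mono (Set.empty_subset _)
    · obtain ⟨z₀, hz₀K, hz₀min⟩ := hK.exists_isMinOn hne Complex.continuous_im.continuousOn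
      have ht : 0 < z₀.im := hKU hz₀K
      exact (hTU z₀.im ht).mono fun z hzK => hz₀min hzK
  -- Step E : the limit is a good function
  have hGdiffOn : DifferentiableOn ℂ G UHP :=
    hTLU.differentiableOn (Eventually.of_forall fun n => goodfun_diff (u n).2) uhp_open
  have hGanal : AnalyticOn ℂ G UHP :=
    (uhp_open.analyticOn_iff_analyticOnNhd).mpr (hGdiffOn.analyticOnNhd uhp_open)
  have hGprop : ∀ z ∈ UHP, 0 ≤ (G z).im ∧ 0 ≤ (z * G z).im ∧
      c0 * ‖G z‖ ≤ (z.im)⁻¹ := by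
    intro z hz
    have ht := hGtend z hz
    refine ⟨?_, ?_, ?_⟩
    · exact ge_of_tendsto' ((Complex.continuous_im.tendsto _).comp ht) fun n => ((u n).2.2.1 z hz).1
    · exact ge_of_tendsto' ((Complex.continuous_im.tendsto _).comp (tendsto_const_nhds.mul ht))
        fun n => ((u n).2.2.1 z hz).2.1
    · have ht3 : Tendsto (fun n => c0 * ‖(u n).1 z‖) atTop
          (𝓝 (c0 * ‖G z‖)) :=
        tendsto_const_nhds.mul ((continuous_norm.tendsto _).comp ht)
      exact le_of_tendsto' ht3 fun n => ((u n).2.2.1 z hz).2.2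
  have hGF : GoodFun c0 G := ⟨hGanal, hGprop, hG0⟩
  -- Step F : convergence in the metric
  refine ⟨⟨G, hGF⟩, ?_⟩
  rw [Metric.tendsto_atTop]
  intro ε hε
  have h1 := hTU η hη
  rw [Metric.tendstoUniformlyOn_iff] at h1
  obtain ⟨N, hN⟩ := Filter.eventually_atTop.mp (h1 (ε/2) (by linarith))
  refine ⟨N, fun n hn => ?_⟩
  have hb : Ldist c0 η (u n) ⟨G, hGF⟩ ≤ ε/2 := by
    apply Ldist_le hη
    intro z
    have h2 := hN n hn z.1 z.2
    rw [Complex.dist_eq] at h2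
    exact h2.le
  calc dist (u n) (⟨G, hGF⟩ : {g : ℂ → ℂ // GoodFun c0 g})
      = Ldist c0 η (u n) ⟨G, hGF⟩ := rfl
    _ ≤ ε/2 := hb
    _ < ε := by linarith
end
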